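/- The subgroup U_O of units of O has finite index in the group U_{Õ} of units of the normalization Õ, provided δ = dim_k(Õ/O) is finite. -/
import Mathlib


/-- For a reduced one-dimensional Noetherian local `k`-algebra `O` (with
`k` a finite field) inside its normalization `R = Õ` (a finite `O`-module), if
`δ = dim_k(Õ/O)` is finite then the unit group `U_O` has finite index in `U_Õ`. -/
theorem unit_index_finite {k R : Type*} [Field k] [Fintype k]
    [CommRing R] [IsNoetherianRing R] [IsReduced R] [Algebra k R]
    (O : Subalgebra k R)
    -- `O` is local
    (hloc : IsLocalRing O)
    -- `R` is the normalization of `O`: it is integral over `O`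
    (hint : ∀ x : R, IsIntegral O x)
    -- `δ = dim_k(Õ/O) < ∞`
    [Module.Finite k (R ⧸ Subalgebra.toSubmodule O)] :
    Finite (Rˣ ⧸ (Units.map (O.val : O →* R)).range) := by
  classical
  set M := Subalgebra.toSubmodule O with hM
  set Q := R ⧸ M with hQdef
  have hQ : Finite Q := Module.finite_of_finite k
  have hsurj : Function.Surjective (Submodule.Quotient.mk (p := M)) :=
    Submodule.Quotient.mk_surjective M
  set s : Q → R := Function.surjInv hsurj with hsdef
  have hs : ∀ q : Q, Submodule.Quotient.mk (s q) = q := fun q =>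
    Function.surjInv_eq hsurj q
  set H := (Units.map (O.val : O →* R)).range with hH
  set F : Rˣ → (Q → Q) × Q := fun u =>
    (fun q => Submodule.Quotient.mk ((u : R) * s q),
      Submodule.Quotient.mk (u : R)) with hF
  have key : ∀ u v : Rˣ, F u = F v →
      (QuotientGroup.mk u : Rˣ ⧸ H) = QuotientGroup.mk v := by
    intro u v h
    have h1 : ∀ q : Q, ((u : R) - v) * s q ∈ O := by
      intro q
      have := congrFun (congrArg Prod.fst h) q
      simp only [hF] at this
      have := (Submodule.Quotient.eq M).mp this
      rwa [← sub_mul] at this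
    have h2 : (u : R) - v ∈ O := by
      have := congrArg Prod.snd h
      simp only [hF] at this
      exact (Submodule.Quotient.eq M).mp this
    have hall : ∀ r : R, ((u : R) - v) * r ∈ O := by
      intro r
      have hr : r - s (Submodule.Quotient.mk r) ∈ O := by
        have : Submodule.Quotient.mk (p := M) r
            = Submodule.Quotient.mk (s (Submodule.Quotient.mk r)) := (hs _).symm
        exact (Submodule.Quotient.eq M).mp this
      have : ((u : R) - v) * r
          = ((u : R) - v) * s (Submodule.Quotient.mk r)
            + ((u : R) - v) * (r - s (Submodule.Quotient.mk r)) := by ring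
      rw [this]
      exact add_mem (h1 _) (mul_mem h2 hr)
    -- show u⁻¹ * v ∈ H
    rw [QuotientGroup.eq]
    have ha : ((u⁻¹ * v : Rˣ) : R) ∈ O := by
      have heq : ((u⁻¹ : Rˣ) : R) * (v : R) = 1 - ((u : R) - v) * ((u⁻¹ : Rˣ) : R) := by
        have hu : (u : R) * ((u⁻¹ : Rˣ) : R) = 1 := u.mul_inv
        linear_combination hu
      rw [Units.val_mul, heq]
      exact sub_mem (one_mem O) (hall _)
    have hb : (((u⁻¹ * v : Rˣ)⁻¹ : Rˣ) : R) ∈ O := by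
      have heq : ((v⁻¹ : Rˣ) : R) * (u : R) = 1 + ((u : R) - v) * ((v⁻¹ : Rˣ) : R) := by
        have hv : (v : R) * ((v⁻¹ : Rˣ) : R) = 1 := v.mul_inv
        linear_combination hv
      have : (u⁻¹ * v : Rˣ)⁻¹ = v⁻¹ * u := by rw [mul_inv_rev, inv_inv]
      rw [this, Units.val_mul, heq]
      exact add_mem (one_mem O) (hall _)
    set w := u⁻¹ * v with hw
    refine ⟨⟨⟨(w : R), ha⟩, ⟨((w⁻¹ : Rˣ) : R), hb⟩, ?_, ?_⟩, Units.ext rfl⟩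
    · exact Subtype.ext w.mul_inv
    · exact Subtype.ext w.inv_mul
  -- conclude finiteness
  have hker : Finite (Quotient (Setoid.ker F)) := by
    have : Function.Injective (Quotient.lift F (fun a b h => Setoid.ker_def.mp h)) := by
      intro a b
      refine Quotient.inductionOn₂ a b fun a b h => Quotient.sound h
    exact Finite.of_injective _ this
  refine Finite.of_surjective
    (Quotient.lift (QuotientGroup.mk : Rˣ → Rˣ ⧸ H) (fun a b h => key a b (Setoid.ker_def.mp h))) ?_
  intro x
  refine QuotientGroup.induction_on x fun u => ⟨Quotient.mk _ u, rfl⟩
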